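/- arXiv:1712.08768 — 8 statements merged into one kernel-verified Lean document; each statement's English description precedes it below -/
import Mathlib

section
/- Fix reals C > 0, N > 0, f > 0, ς > 0, P ≥ 0, β ≥ 0, μ ≥ 0, B > 0. If (μ + β·P)/(β·ς·N·f² + 1) ≤ B, then U_B is nondecreasing on the interval [N·B/(f + N·B), 1]; i.e., for all x, y with N·B/(f + N·B) ≤ x ≤ y ≤ 1 one has U_B(x) ≤ U_B(y). -/
noncomputable def U (C N f ς P β μ B x : ℝ) : ℝ :=
  x * C - β * (ς * C * N * f ^ 2 * (1 - x) + P * x * C / B) -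
    μ * max ((1 - x) * C * N / f) (x * C / B)

theorem stmt_3 (C N f ς P β μ B : ℝ) (hC : 0 < C) (hN : 0 < N) (hf : 0 < f)
    (hς : 0 < ς) (hP : 0 ≤ P) (hβ : 0 ≤ β) (hμ : 0 ≤ μ) (hB : 0 < B)
    (hcond : (μ + β * P) / (β * ς * N * f ^ 2 + 1) ≤ B) :
    ∀ x y : ℝ, N * B / (f + N * B) ≤ x → x ≤ y → y ≤ 1 →
      U C N f ς P β μ B x ≤ U C N f ς P β μ B y := by
  intro x y hx hxy hy1
  have hfNB : 0 < f + N * B := by positivity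
  have hden : 0 < β * ς * N * f ^ 2 + 1 := by positivity
  have hcond' : μ + β * P ≤ B * (β * ς * N * f ^ 2 + 1) := by
    rw [div_le_iff₀ hden] at hcond; linarith
  have key : ∀ z : ℝ, N * B / (f + N * B) ≤ z →
      max ((1 - z) * C * N / f) (z * C / B) = z * C / B := by
    intro z hz
    apply max_eq_right
    rw [div_le_div_iff₀ hf hB]
    rw [div_le_iff₀ hfNB] at hz
    nlinarith
  have hy : N * B / (f + N * B) ≤ y := le_trans hx hxy
  rw [U, U, key x hx, key y hy]
  have h1 : 0 ≤ (y - x) * (C * (B * (β * ς * N * f ^ 2 + 1) - (μ + β * P))) := by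
    apply mul_nonneg (by linarith)
    apply mul_nonneg hC.le (by linarith)
  have h3 : (μ + β * P) * B⁻¹ ≤ β * ς * N * f ^ 2 + 1 := by
    rw [← div_eq_mul_inv, div_le_iff₀ hB]; linarith
  have h2 : 0 ≤ (y - x) * (C * ((β * ς * N * f ^ 2 + 1) - (μ + β * P) * B⁻¹)) := by
    apply mul_nonneg (by linarith)
    apply mul_nonneg hC.le (by linarith)
  simp only [div_eq_mul_inv]
  nlinarith [h2]
end

section
/- Fix reals C > 0, N > 0, f > 0, ς > 0, P ≥ 0, β ≥ 0, μ ≥ 0, B > 0. If B·(f + β·ς·N·f³ + μ·N) ≥ β·P·f, then U_B is nondecreasing on the interval [0, N·B/(f + N·B)]; i.e., for all x, y with 0 ≤ x ≤ y ≤ N·B/(f + N·B) one has U_B(x) ≤ U_B(y). -/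
theorem stmt_4 (C N f ς P β μ B : ℝ) (hC : 0 < C) (hN : 0 < N) (hf : 0 < f)
    (hς : 0 < ς) (hP : 0 ≤ P) (hβ : 0 ≤ β) (hμ : 0 ≤ μ) (hB : 0 < B)
    (hcond : β * P * f ≤ B * (f + β * ς * N * f ^ 3 + μ * N)) :
    ∀ x y : ℝ, 0 ≤ x → x ≤ y → y ≤ N * B / (f + N * B) →
      U C N f ς P β μ B x ≤ U C N f ς P β μ B y := by
  intro x y hx hxy hy
  have hden : 0 < f + N * B := by positivity
  have hmax : ∀ z : ℝ, 0 ≤ z → z ≤ N * B / (f + N * B) →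
      max ((1 - z) * C * N / f) (z * C / B) = (1 - z) * C * N / f := by
    intro z hz0 hz
    apply max_eq_left
    rw [div_le_div_iff₀ hB hf]
    have hz' : z * (f + N * B) ≤ N * B := (le_div_iff₀ hden).mp hz
    nlinarith
  have hxle : x ≤ N * B / (f + N * B) := le_trans hxy hy
  unfold U
  rw [hmax x hx hxle, hmax y (le_trans hx hxy) hy]
  have hcond' : 0 ≤ B * (f + β * ς * N * f ^ 3 + μ * N) - β * P * f := by linarith
  rw [← sub_nonneg]
  have hexp : (y * C - β * (ς * C * N * f ^ 2 * (1 - y) + P * y * C / B) -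
      μ * ((1 - y) * C * N / f)) -
      (x * C - β * (ς * C * N * f ^ 2 * (1 - x) + P * x * C / B) -
      μ * ((1 - x) * C * N / f)) =
      ((y - x) * (C * (B * (f + β * ς * N * f ^ 3 + μ * N) - β * P * f))) / (B * f) := by
    field_simp
    ring
  rw [hexp]
  exact div_nonneg (mul_nonneg (by linarith) (mul_nonneg hC.le hcond')) (by positivity)
end

section
/- Fix reals C > 0, N > 0, f > 0, ς > 0, P ≥ 0, β ≥ 0, μ ≥ 0, B > 0. If B·(f + β·ς·N·f³ + μ·N) ≤ β·P·f, then U_B is nonincreasing on the interval [0, N·B/(f + N·B)]; i.e., for all x, y with 0 ≤ x ≤ y ≤ N·B/(f + N·B) one has U_B(y) ≤ U_B(x). -/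
theorem stmt_7 (C N f ς P β μ B : ℝ) (hC : 0 < C) (hN : 0 < N) (hf : 0 < f)
    (hς : 0 < ς) (hP : 0 ≤ P) (hβ : 0 ≤ β) (hμ : 0 ≤ μ) (hB : 0 < B)
    (hcond : B * (f + β * ς * N * f ^ 3 + μ * N) ≤ β * P * f) :
    ∀ x y : ℝ, 0 ≤ x → x ≤ y → y ≤ N * B / (f + N * B) →
      U C N f ς P β μ B y ≤ U C N f ς P β μ B x := by
  intro x y hx hxy hy
  have hden : 0 < f + N * B := by positivity
  have hxle : x ≤ N * B / (f + N * B) := le_trans hxy hy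
  have key : ∀ z : ℝ, z ≤ N * B / (f + N * B) →
      max ((1 - z) * C * N / f) (z * C / B) = (1 - z) * C * N / f := by
    intro z hz
    apply max_eq_left
    rw [div_le_div_iff₀ hB hf]
    have hz' : z * (f + N * B) ≤ N * B := by
      rwa [le_div_iff₀ hden] at hz
    nlinarith
  unfold U
  rw [key x hxle, key y hy]
  have hslope : 1 + β * ς * N * f ^ 2 + μ * N / f ≤ β * P / B := by
    have heq : 1 + β * ς * N * f ^ 2 + μ * N / f = (f + β * ς * N * f ^ 3 + μ * N) / f := by
      field_simp
    rw [heq, div_le_div_iff₀ hf hB]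
    nlinarith
  have hd : y - x ≥ 0 := by linarith
  have := mul_le_mul_of_nonneg_right hslope hd
  have hexp : (y * C - β * (ς * C * N * f ^ 2 * (1 - y) + P * y * C / B) -
      μ * ((1 - y) * C * N / f)) - (x * C - β * (ς * C * N * f ^ 2 * (1 - x) + P * x * C / B) -
      μ * ((1 - x) * C * N / f)) = C * ((1 + β * ς * N * f ^ 2 + μ * N / f - β * P / B) * (y - x)) := by
    field_simp
    ring
  nlinarith [mul_le_mul_of_nonneg_left this (le_of_lt hC)]
end

section
/- Fix reals C > 0, N > 0, f > 0, ς > 0, P ≥ 0, β ≥ 0, μ ≥ 0, B > 0. If (μ + β·P)/(β·ς·N·f² + 1) ≤ B, then full offloading is optimal for that link: for every x ∈ [0,1], U_B(x) ≤ U_B(1), and U_B(1) = C·(B − β·P − μ)/B. -/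
theorem stmt_9 (C N f ς P β μ B : ℝ) (hC : 0 < C) (hN : 0 < N) (hf : 0 < f)
    (hς : 0 < ς) (hP : 0 ≤ P) (hβ : 0 ≤ β) (hμ : 0 ≤ μ) (hB : 0 < B)
    (hcond : (μ + β * P) / (β * ς * N * f ^ 2 + 1) ≤ B) :
    (∀ x ∈ Set.Icc (0:ℝ) 1, U C N f ς P β μ B x ≤ U C N f ς P β μ B 1) ∧
    U C N f ς P β μ B 1 = C * (B - β * P - μ) / B := by
  have hden : (0:ℝ) < β * ς * N * f ^ 2 + 1 := by positivity
  have key : μ + β * P ≤ B * (β * ς * N * f ^ 2 + 1) := by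
    rw [div_le_iff₀ hden] at hcond; linarith
  have h1 : max ((1 - (1:ℝ)) * C * N / f) (1 * C / B) = 1 * C / B := by
    apply max_eq_right
    have : (1 - (1:ℝ)) * C * N / f = 0 := by ring
    rw [this]; positivity
  constructor
  · intro x hx
    obtain ⟨hx0, hx1⟩ := hx
    unfold U
    rw [h1]
    have hmax : x * C / B ≤ max ((1 - x) * C * N / f) (x * C / B) := le_max_right _ _
    have hmul : μ * (x * C / B) ≤ μ * max ((1 - x) * C * N / f) (x * C / B) :=
      mul_le_mul_of_nonneg_left hmax hμ
    have hBinv : (0:ℝ) < B⁻¹ := by positivity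
    have h2 : (μ + β * P) * ((1 - x) * C) / B ≤ (β * ς * N * f ^ 2 + 1) * ((1 - x) * C) := by
      rw [div_le_iff₀ hB]
      nlinarith [mul_le_mul_of_nonneg_right key (mul_nonneg (sub_nonneg.2 hx1) hC.le)]
    simp only [div_eq_mul_inv] at hmul h2 ⊢
    nlinarith [hmul, h2]
  · unfold U
    rw [h1]
    field_simp
    ring
end

section
/- Fix reals C > 0, N > 0, f > 0, ς > 0, P ≥ 0, β ≥ 0, μ ≥ 0, B > 0. If B·(f + β·ς·N·f³ + μ·N) ≤ β·P·f, then purely local computing is optimal for that link: for every x ∈ [0,1], U_B(x) ≤ U_B(0), and U_B(0) = −C·N·(β·ς·f² + μ/f). -/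
theorem stmt_10 (C N f ς P β μ B : ℝ) (hC : 0 < C) (hN : 0 < N) (hf : 0 < f)
    (hς : 0 < ς) (hP : 0 ≤ P) (hβ : 0 ≤ β) (hμ : 0 ≤ μ) (hB : 0 < B)
    (hcond : B * (f + β * ς * N * f ^ 3 + μ * N) ≤ β * P * f) :
    (∀ x ∈ Set.Icc (0:ℝ) 1, U C N f ς P β μ B x ≤ U C N f ς P β μ B 0) ∧
    U C N f ς P β μ B 0 = -(C * N * (β * ς * f ^ 2 + μ / f)) := by
  have h0 : U C N f ς P β μ B 0 = -(C * N * (β * ς * f ^ 2 + μ / f)) := by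
    have hmax : max ((1 - (0:ℝ)) * C * N / f) (0 * C / B) = C * N / f := by
      rw [max_eq_left]
      · ring
      · rw [zero_mul, zero_div]; positivity
    simp only [U, hmax]
    field_simp
    ring
  refine ⟨fun x hx => ?_, h0⟩
  obtain ⟨hx0, hx1⟩ := hx
  rw [h0]
  have hmax : (1 - x) * C * N / f ≤ max ((1 - x) * C * N / f) (x * C / B) :=
    le_max_left _ _
  have key : U C N f ς P β μ B x ≤
      x * C - β * (ς * C * N * f ^ 2 * (1 - x) + P * x * C / B) -
        μ * ((1 - x) * C * N / f) := by
    unfold U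
    have := mul_le_mul_of_nonneg_left hmax hμ
    linarith
  refine key.trans ?_
  rw [← sub_nonneg]
  have heq : -(C * N * (β * ς * f ^ 2 + μ / f)) -
      (x * C - β * (ς * C * N * f ^ 2 * (1 - x) + P * x * C / B) -
        μ * ((1 - x) * C * N / f)) =
      x * C * (β * P * f - B * (f + β * ς * N * f ^ 3 + μ * N)) / (B * f) := by
    field_simp
    ring
  rw [heq]
  apply div_nonneg _ (mul_pos hB hf).le
  exact mul_nonneg (mul_nonneg hx0 hC.le) (sub_nonneg.2 hcond)
end

section
/- (Theorem 1.) Let M ≥ 1 and let B_1, …, B_M > 0 be the radio bandwidths to the M MEC devices, with i* an index achieving the maximum bandwidth B_{i*} = max_{1 ≤ i ≤ M} B_i. Fix reals C > 0, N > 0, f > 0, ς > 0, P ≥ 0, β ≥ 0, μ ≥ 0, ψ ≥ 0, b ∈ ℝ, ρ ∈ ℝ. Suppose max((μ + β·P)/(β·ς·N·f² + 1), 1/(ς·N·f²)) ≤ B_{i*} and suppose the battery suffices at full offloading to i*: b − P·C/B_{i*} + ρ > 0. Then the action of offloading the entire task to MEC device i* is optimal: for every index i ∈ {1,…,M} and every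 x ∈ [0,1], Û_{B_i}(x) ≤ Û_{B_{i*}}(1), and the optimal utility equals Û_{B_{i*}}(1) = C·(B_{i*} − β·P − μ)/B_{i*}. -/
noncomputable def Uhat (C N f ς P β μ ψ b ρ B x : ℝ) : ℝ :=
  U C N f ς P β μ B x -
    ψ * (if b - (ς * C * N * f ^ 2 * (1 - x) + P * x * C / B) + ρ ≤ 0 then 1 else 0)

theorem stmt_12 (M : ℕ) (hM : 1 ≤ M) (B : Fin M → ℝ) (hBpos : ∀ i, 0 < B i)
    (istar : Fin M) (hmax : ∀ i, B i ≤ B istar)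
    (C N f ς P β μ ψ b ρ : ℝ) (hC : 0 < C) (hN : 0 < N) (hf : 0 < f)
    (hς : 0 < ς) (hP : 0 ≤ P) (hβ : 0 ≤ β) (hμ : 0 ≤ μ) (hψ : 0 ≤ ψ)
    (hcond : max ((μ + β * P) / (β * ς * N * f ^ 2 + 1)) (1 / (ς * N * f ^ 2)) ≤ B istar)
    (hbatt : 0 < b - P * C / B istar + ρ) :
    (∀ i : Fin M, ∀ x ∈ Set.Icc (0:ℝ) 1,
      Uhat C N f ς P β μ ψ b ρ (B i) x ≤ Uhat C N f ς P β μ ψ b ρ (B istar) 1) ∧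
    Uhat C N f ς P β μ ψ b ρ (B istar) 1 = C * (B istar - β * P - μ) / B istar := by
  have hBs : 0 < B istar := hBpos istar
  have hd : (0:ℝ) < β * ς * N * f ^ 2 + 1 := by positivity
  have hK : μ + β * P ≤ (β * ς * N * f ^ 2 + 1) * B istar := by
    have h1 : (μ + β * P) / (β * ς * N * f ^ 2 + 1) ≤ B istar :=
      le_trans (le_max_left _ _) hcond
    rw [div_le_iff₀ hd] at h1
    linarith
  have hval : Uhat C N f ς P β μ ψ b ρ (B istar) 1 = C * (B istar - β * P - μ) / B istar := by
    unfold Uhat U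
    rw [if_neg, max_eq_right]
    · field_simp
      ring
    · have : ((1:ℝ) - 1) * C * N / f = 0 := by ring
      rw [this]
      positivity
    · push_neg
      have : b - (ς * C * N * f ^ 2 * (1 - 1) + P * 1 * C / B istar) + ρ
          = b - P * C / B istar + ρ := by ring
      rw [this]
      exact hbatt
  refine ⟨?_, hval⟩
  intro i x hx
  obtain ⟨hx0, hx1⟩ := hx
  have hBi : 0 < B i := hBpos i
  have hle : B i ≤ B istar := hmax i
  rw [hval]
  have hind : 0 ≤ ψ * (if b - (ς * C * N * f ^ 2 * (1 - x) + P * x * C / B i) + ρ ≤ 0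
      then (1:ℝ) else 0) := by
    split_ifs <;> simp [hψ]
  have hstep1 : Uhat C N f ς P β μ ψ b ρ (B i) x ≤ U C N f ς P β μ (B i) x := by
    unfold Uhat; linarith
  have h1 : β * (ς * C * N * f ^ 2 * (1 - x) + P * x * C / B istar)
      ≤ β * (ς * C * N * f ^ 2 * (1 - x) + P * x * C / B i) := by
    apply mul_le_mul_of_nonneg_left _ hβ
    have : P * x * C / B istar ≤ P * x * C / B i := by
      apply div_le_div_of_nonneg_left ?_ hBi hle
      positivity
    linarith
  have h2 : μ * (x * C / B istar) ≤ μ * max ((1 - x) * C * N / f) (x * C / B i) := by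
    apply mul_le_mul_of_nonneg_left _ hμ
    refine le_trans ?_ (le_max_right _ _)
    apply div_le_div_of_nonneg_left ?_ hBi hle
    positivity
  have h3 : x * C - β * (ς * C * N * f ^ 2 * (1 - x) + P * x * C / B istar)
      - μ * (x * C / B istar) ≤ C * (B istar - β * P - μ) / B istar := by
    rw [← sub_nonneg]
    have key : 0 ≤ (1 - x) * C * ((β * ς * N * f ^ 2 + 1) * B istar - (μ + β * P)) := by
      apply mul_nonneg (mul_nonneg (by linarith) hC.le)
      linarith
    have hexp : C * (B istar - β * P - μ) / B istar -
        (x * C - β * (ς * C * N * f ^ 2 * (1 - x) + P * x * C / B istar)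
          - μ * (x * C / B istar))
        = ((1 - x) * C * ((β * ς * N * f ^ 2 + 1) * B istar - (μ + β * P))) / B istar := by
      field_simp
      ring
    rw [hexp]
    positivity
  calc Uhat C N f ς P β μ ψ b ρ (B i) x ≤ U C N f ς P β μ (B i) x := hstep1
    _ ≤ x * C - β * (ς * C * N * f ^ 2 * (1 - x) + P * x * C / B istar)
        - μ * (x * C / B istar) := by unfold U; linarith
    _ ≤ C * (B istar - β * P - μ) / B istar := h3
end

section
/- (Theorem 2.) Let M ≥ 1 and let B_1, …, B_M > 0 be the radio bandwidths to the M MEC devices, with i* an index achieving the maximum bandwidth B_{i*} = max_{1 ≤ i ≤ M} B_i. Fix reals C > 0, N > 0, f > 0, ς > 0, P ≥ 0, β ≥ 0, μ ≥ 0, ψ ≥ 0, b ∈ ℝ, ρ ∈ ℝ. Suppose B_{i*}·(f + β·ς·N·f³ + μ·N) ≤ β·P·f and suppose the battery suffices for purely local computing: b − ς·C·N·f² + ρ > 0. Then processing the entire task locally is optimal: for every index i ∈ {1,…,M} and every x ∈ [0,1], Û_{B_i}(x) ≤ Û_{B_i}(0), and the optimal utility equals Û_{B_i}(0) = −C·N·(β·ς·f²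 + μ/f). -/
theorem stmt_13 (M : ℕ) (hM : 1 ≤ M) (B : Fin M → ℝ) (hBpos : ∀ i, 0 < B i)
    (istar : Fin M) (hmax : ∀ i, B i ≤ B istar)
    (C N f ς P β μ ψ b ρ : ℝ) (hC : 0 < C) (hN : 0 < N) (hf : 0 < f)
    (hς : 0 < ς) (hP : 0 ≤ P) (hβ : 0 ≤ β) (hμ : 0 ≤ μ) (hψ : 0 ≤ ψ)
    (hcond : B istar * (f + β * ς * N * f ^ 3 + μ * N) ≤ β * P * f)
    (hbatt : 0 < b - ς * C * N * f ^ 2 + ρ) :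
    ∀ i : Fin M,
      (∀ x ∈ Set.Icc (0:ℝ) 1,
        Uhat C N f ς P β μ ψ b ρ (B i) x ≤ Uhat C N f ς P β μ ψ b ρ (B i) 0) ∧
      Uhat C N f ς P β μ ψ b ρ (B i) 0 = -(C * N * (β * ς * f ^ 2 + μ / f)) := by
  intro i
  have hB : 0 < B i := hBpos i
  -- indicator at 0 is false
  have hind0 : ¬ (b - (ς * C * N * f ^ 2 * (1 - (0:ℝ)) + P * 0 * C / B i) + ρ ≤ 0) := by
    push_neg
    have : P * 0 * C / B i = 0 := by ring
    nlinarith [hbatt]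
  have hmax0 : max ((1 - (0:ℝ)) * C * N / f) (0 * C / B i) = C * N / f := by
    have h1 : (1 - (0:ℝ)) * C * N / f = C * N / f := by ring
    have h2 : (0:ℝ) * C / B i = 0 := by ring
    rw [h1, h2, max_eq_left (by positivity)]
  have hU0 : Uhat C N f ς P β μ ψ b ρ (B i) 0 = -(C * N * (β * ς * f ^ 2 + μ / f)) := by
    unfold Uhat U
    rw [if_neg hind0, hmax0]
    field_simp
    ring
  refine ⟨?_, hU0⟩
  intro x hx
  obtain ⟨hx0, hx1⟩ := hx
  -- key inequality
  have hS : B i * (f + β * ς * N * f ^ 3 + μ * N) ≤ β * P * f := by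
    refine le_trans ?_ hcond
    have hSpos : 0 ≤ f + β * ς * N * f ^ 3 + μ * N := by positivity
    exact mul_le_mul_of_nonneg_right (hmax i) hSpos
  have hkey : C + β * ς * C * N * f ^ 2 + μ * C * N / f ≤ β * P * C / B i := by
    rw [le_div_iff₀ hB]
    have h3 : (C + β * ς * C * N * f ^ 2 + μ * C * N / f) * B i
        = (C / f) * (B i * (f + β * ς * N * f ^ 3 + μ * N)) := by
      field_simp
    rw [h3]
    calc (C / f) * (B i * (f + β * ς * N * f ^ 3 + μ * N))
        ≤ (C / f) * (β * P * f) := by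
          exact mul_le_mul_of_nonneg_left hS (by positivity)
      _ = β * P * C := by field_simp
  have hUle : U C N f ς P β μ (B i) x ≤ U C N f ς P β μ (B i) 0 := by
    unfold U
    rw [hmax0]
    have hmax1 : μ * ((1 - x) * C * N / f) ≤ μ * max ((1 - x) * C * N / f) (x * C / B i) :=
      mul_le_mul_of_nonneg_left (le_max_left _ _) hμ
    have hkx : x * (C + β * ς * C * N * f ^ 2 + μ * C * N / f) ≤ x * (β * P * C / B i) :=
      mul_le_mul_of_nonneg_left hkey hx0
    ring_nf at hkx hmax1 ⊢
    linarith [hkx, hmax1]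
  unfold Uhat
  rw [if_neg hind0]
  have hindx : 0 ≤ ψ * (if b - (ς * C * N * f ^ 2 * (1 - x) + P * x * C / B i) + ρ ≤ 0 then (1:ℝ) else 0) := by
    positivity
  linarith [hUle]
end

section
/- (Theorem 1, quantized action set.) Let M ≥ 1 and let B_1, …, B_M > 0 with i* achieving B_{i*} = max_{1 ≤ i ≤ M} B_i. Fix reals C > 0, N > 0, f > 0, ς > 0, P ≥ 0, β ≥ 0, μ ≥ 0, and a positive integer N_x. If (μ + β·P)/(β·ς·N·f² + 1) ≤ B_{i*}, then over the finite action set A = {1,…,M} × {l/N_x : l = 0, 1, …, N_x}, the pair (i*, 1) maximizes the deterministic utility: for every i ∈ {1,…,M} and every l ∈ {0,…,N_x}, U_{B_i}(l/N_x) ≤ U_{B_{i*}}(1) = C·(B_{i*} − β·P − μ)/B_{i*}. -/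
theorem stmt_14 (M : ℕ) (hM : 1 ≤ M) (B : Fin M → ℝ) (hBpos : ∀ i, 0 < B i)
    (istar : Fin M) (hmax : ∀ i, B i ≤ B istar)
    (C N f ς P β μ : ℝ) (hC : 0 < C) (hN : 0 < N) (hf : 0 < f)
    (hς : 0 < ς) (hP : 0 ≤ P) (hβ : 0 ≤ β) (hμ : 0 ≤ μ)
    (Nx : ℕ) (hNx : 0 < Nx)
    (hcond : (μ + β * P) / (β * ς * N * f ^ 2 + 1) ≤ B istar) :
    (∀ i : Fin M, ∀ l : ℕ, l ≤ Nx →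
      U C N f ς P β μ (B i) ((l : ℝ) / (Nx : ℝ)) ≤ U C N f ς P β μ (B istar) 1) ∧
    U C N f ς P β μ (B istar) 1 = C * (B istar - β * P - μ) / B istar := by
  have hBs : 0 < B istar := hBpos istar
  have hD : (0:ℝ) < β * ς * N * f ^ 2 + 1 := by positivity
  have h1 : μ + β * P ≤ B istar * (β * ς * N * f ^ 2 + 1) :=
    (div_le_iff₀ hD).mp hcond
  constructor
  · intro i l hl
    have hBi : 0 < B i := hBpos i
    have hle : B i ≤ B istar := hmax i
    set x : ℝ := (l : ℝ) / (Nx : ℝ) with hx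
    have hNx' : (0:ℝ) < (Nx : ℝ) := by exact_mod_cast hNx
    have hx0 : 0 ≤ x := by positivity
    have hx1 : x ≤ 1 := by
      rw [hx, div_le_one hNx']
      exact_mod_cast hl
    have step1 : U C N f ς P β μ (B i) x ≤ U C N f ς P β μ (B istar) x := by
      unfold U
      have h2 : P * x * C / B istar ≤ P * x * C / B i := by
        apply div_le_div_of_nonneg_left (by positivity) hBi hle
      have h3 : max ((1 - x) * C * N / f) (x * C / B istar) ≤
          max ((1 - x) * C * N / f) (x * C / B i) := by
        apply max_le_max le_rfl
        apply div_le_div_of_nonneg_left (by positivity) hBi hle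
      have := mul_le_mul_of_nonneg_left h3 hμ
      nlinarith [mul_le_mul_of_nonneg_left h2 hβ]
    have step2 : U C N f ς P β μ (B istar) x ≤ U C N f ς P β μ (B istar) 1 := by
      unfold U
      have hm : x * C / B istar ≤ max ((1 - x) * C * N / f) (x * C / B istar) :=
        le_max_right _ _
      have hmax1 : max ((1 - (1:ℝ)) * C * N / f) (1 * C / B istar) = C / B istar := by
        rw [max_eq_right] <;> simp <;> positivity
      rw [hmax1]
      simp only [div_eq_mul_inv] at hm ⊢
      set v : ℝ := (B istar)⁻¹ with hv
      have hv0 : 0 < v := by positivity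
      have hbv : B istar * v = 1 := mul_inv_cancel₀ (ne_of_gt hBs)
      have h2 : (β * P + μ) * v ≤ β * ς * N * f ^ 2 + 1 := by
        have := mul_le_mul_of_nonneg_right h1 hv0.le
        calc (β * P + μ) * v ≤ B istar * (β * ς * N * f ^ 2 + 1) * v := by linarith
          _ = (β * ς * N * f ^ 2 + 1) := by rw [mul_comm (B istar), mul_assoc, hbv, mul_one]
      have hbr : 0 ≤ 1 + β * ς * N * f ^ 2 - (β * P + μ) * v := by linarith
      have hxm := mul_le_mul_of_nonneg_left hm hμ
      nlinarith [mul_nonneg (mul_nonneg (sub_nonneg.mpr hx1) hC.le) hbr]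
    exact le_trans step1 step2
  · unfold U
    have hmax1 : max ((1 - (1:ℝ)) * C * N / f) (1 * C / B istar) = C / B istar := by
      rw [max_eq_right] <;> simp <;> positivity
    rw [hmax1]
    field_simp
    ring
end
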